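/- arXiv:1601.06034 — 3 statements merged into one kernel-verified Lean document; each statement's English description precedes it below -/
import Mathlib

section
/- Let $K\in\mathscr{C}^\infty(E_*)$ be a positive function satisfying the growth condition: there exist $0<r_1\leq 1\leq r_2$ with $K(\xi) > (m-1)/\|\xi\|$ whenever $\|\xi\|<r_1$ and $K(\xi)<(m-1)/\|\xi\|$ whenever $\|\xi\|>r_2$. Then every solution $u\in\mathscr{C}^3(\Sigma)$ of the fiberwise mean-curvature equation $\sum_{\alpha,\beta} B^{\alpha\beta}(u) D_{\alpha\beta}u = (m-1)(1+v_1) - (1+v_1)^{3/2}e^u K(e^u\xi)$, where $B^{\alpha\beta} = (1+v_1)G^{\alpha\beta} - D^\alpha u D^\beta u$ and $v_1 = D_\alpha u D^\alpha u$ is the squared vertical gradient, satisfies $r_1\leq e^u\leq r_2$ everywhere on $\Sigma$. -/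
/-!
STATEMENT 7.  `C⁰` a priori bounds from the growth condition.

Component model of the fiberwise (vertical) prescribed mean curvature equation on the
unit sphere bundle `Σ` (type `S`) of a rank-`m ≥ 2` Riemannian vector bundle: indices
`α : Fin (m-1)` label the vertical frame directions tangent to the fibre spheres (all
marked by `μ = 0`), `Ginv` are the components `Gᵅᵝ` of the inverse metric, `u ∈ C³(Σ)`
has vertical derivatives `Du`, `D2u`, and `K r ξ` encodes `K(rξ)`.  With `μ ≡ 0` the
general operators specialise to `Bᵅᵝ = (1+v₁)Gᵅᵝ - Dᵅu Dᵝu` and the equation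
`Bᵅᵝ D_{αβ}u = (m-1)(1+v₁) - (1+v₁)^{3/2} e^u K(e^u ξ)`.

Claim: if `K > 0` satisfies the growth condition `(1.1)` with `0 < r₁ ≤ 1 ≤ r₂`, then
every `C³` solution satisfies `r₁ ≤ e^u ≤ r₂` everywhere on `Σ`.
-/

noncomputable section

open scoped BigOperators

variable {S : Type} {N : ℕ}

/-- Rescaled lowered derivative `D̃_a u = e^{μ_a u} D_a u`. -/
def tDlow (μ : Fin N → ℝ) (u : S → ℝ) (Du : S → Fin N → ℝ) (ξ : S) (a : Fin N) : ℝ :=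
  Real.exp (μ a * u ξ) * Du ξ a

/-- Rescaled raised derivative `D̃ᵃ u = e^{μ_a u} Gᵃᵇ D_b u`. -/
def tDup (Ginv : S → Fin N → Fin N → ℝ) (μ : Fin N → ℝ) (u : S → ℝ)
    (Du : S → Fin N → ℝ) (ξ : S) (a : Fin N) : ℝ :=
  Real.exp (μ a * u ξ) * ∑ b, Ginv ξ a b * Du ξ b

/-- Vertical rescaled gradient square `v₁ = (1-μ_a) D̃_a u D̃ᵃ u`. -/
def vv1 (Ginv : S → Fin N → Fin N → ℝ) (μ : Fin N → ℝ) (u : S → ℝ)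
    (Du : S → Fin N → ℝ) (ξ : S) : ℝ :=
  ∑ a, (1 - μ a) * tDlow μ u Du ξ a * tDup Ginv μ u Du ξ a

/-- Horizontal rescaled gradient square `v₂ = μ_a D̃_a u D̃ᵃ u`. -/
def vv2 (Ginv : S → Fin N → Fin N → ℝ) (μ : Fin N → ℝ) (u : S → ℝ)
    (Du : S → Fin N → ℝ) (ξ : S) : ℝ :=
  ∑ a, μ a * tDlow μ u Du ξ a * tDup Ginv μ u Du ξ a

/-- `v = v₁ + v₂`. -/
def vv (Ginv : S → Fin N → Fin N → ℝ) (μ : Fin N → ℝ) (u : S → ℝ)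
    (Du : S → Fin N → ℝ) (ξ : S) : ℝ :=
  vv1 Ginv μ u Du ξ + vv2 Ginv μ u Du ξ

/-- Coefficients `Aᵃᵇ(u) = (1+v) Gᵃᵇ - D̃ᵃu D̃ᵇu` of the equation. -/
def Acoef (Ginv : S → Fin N → Fin N → ℝ) (μ : Fin N → ℝ) (u : S → ℝ)
    (Du : S → Fin N → ℝ) (ξ : S) (a b : Fin N) : ℝ :=
  (1 + vv Ginv μ u Du ξ) * Ginv ξ a b - tDup Ginv μ u Du ξ a * tDup Ginv μ u Du ξ b

/-- Rescaled Hessian `D̃_{ab} u = e^{(μ_a+μ_b) u} D_{ab} u`. -/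
def tD2 (μ : Fin N → ℝ) (u : S → ℝ) (D2u : S → Fin N → Fin N → ℝ)
    (ξ : S) (a b : Fin N) : ℝ :=
  Real.exp ((μ a + μ b) * u ξ) * D2u ξ a b

/-- Left-hand side `Aᵃᵇ(u) D̃_{ab}u` of the prescribed mean curvature equation. -/
def MCop (Ginv : S → Fin N → Fin N → ℝ) (μ : Fin N → ℝ) (u : S → ℝ)
    (Du : S → Fin N → ℝ) (D2u : S → Fin N → Fin N → ℝ) (ξ : S) : ℝ :=
  ∑ a, ∑ b, Acoef Ginv μ u Du ξ a b * tD2 μ u D2u ξ a b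

/-- Right-hand side `-v₂ + (m-1)(1+v) - (1+v)^{3/2} e^u K(e^u ξ)` of the equation;
here `K r ξ` stands for `K(rξ)`. -/
def RHSK (m : ℕ) (K : ℝ → S → ℝ) (Ginv : S → Fin N → Fin N → ℝ) (μ : Fin N → ℝ)
    (u : S → ℝ) (Du : S → Fin N → ℝ) (ξ : S) : ℝ :=
  -vv2 Ginv μ u Du ξ + ((m : ℝ) - 1) * (1 + vv Ginv μ u Du ξ)
    - (1 + vv Ginv μ u Du ξ) ^ ((3 : ℝ) / 2) * Real.exp (u ξ) * K (Real.exp (u ξ)) ξ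

/-- Positive definiteness of the (inverse) metric components. -/
def PosDefFam (Ginv : S → Fin N → Fin N → ℝ) : Prop :=
  ∀ (ξ : S) (w : Fin N → ℝ), w ≠ 0 → 0 < ∑ a, ∑ b, Ginv ξ a b * w a * w b

/-- Encoding of the second-order maximum principle data of a `C²` function on the compact
manifold `Σ`: at a maximum point the gradient vanishes and the Hessian is negative
semidefinite, at a minimum point the gradient vanishes and the Hessian is positive
semidefinite. -/
def MaxPrincipleData (u : S → ℝ) (Du : S → Fin N → ℝ)
    (D2u : S → Fin N → Fin N → ℝ) : Prop :=
  (∀ ξ : S, (∀ η, u η ≤ u ξ) →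
      (∀ a, Du ξ a = 0) ∧ ∀ w : Fin N → ℝ, ∑ a, ∑ b, D2u ξ a b * w a * w b ≤ 0)
  ∧ (∀ ξ : S, (∀ η, u ξ ≤ u η) →
      (∀ a, Du ξ a = 0) ∧ ∀ w : Fin N → ℝ, 0 ≤ ∑ a, ∑ b, D2u ξ a b * w a * w b)



lemma dsum_lin {n : ℕ} (f g : Fin n → Fin n → ℝ) (c d : ℝ) :
    ∑ a, ∑ b, (c * f a b + d * g a b)
      = c * (∑ a, ∑ b, f a b) + d * ∑ a, ∑ b, g a b := by
  simp [Finset.sum_add_distrib, Finset.mul_sum]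

open scoped MatrixOrder in
lemma trace_psd_nsd {n : ℕ} (G D : Fin n → Fin n → ℝ)
    (hGs : ∀ a b, G a b = G b a)
    (hG : ∀ w : Fin n → ℝ, 0 ≤ ∑ a, ∑ b, G a b * w a * w b)
    (hD : ∀ w : Fin n → ℝ, ∑ a, ∑ b, D a b * w a * w b ≤ 0) :
    ∑ a, ∑ b, G a b * D a b ≤ 0 := by
  classical
  set Gm : Matrix (Fin n) (Fin n) ℝ := Matrix.of G with hGm_def
  set Hm : Matrix (Fin n) (Fin n) ℝ := Matrix.of (fun a b => -((D a b + D b a) / 2)) with hHm_def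
  have quad : ∀ (M : Matrix (Fin n) (Fin n) ℝ) (x : Fin n → ℝ),
      dotProduct (star x) (Matrix.mulVec M x) = ∑ a, ∑ b, M a b * x a * x b := by
    intro M x
    simp only [star_trivial, dotProduct, Matrix.mulVec, dotProduct]
    exact Finset.sum_congr rfl fun a _ => by
      rw [Finset.mul_sum]; exact Finset.sum_congr rfl fun b _ => by ring
  have hGm : Gm.PosSemidef := by
    refine Matrix.PosSemidef.of_dotProduct_mulVec_nonneg ?_ ?_
    · ext a b
      simp only [Matrix.conjTranspose_apply, star_trivial, hGm_def, Matrix.of_apply]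
      exact hGs b a
    · intro x; rw [quad]; exact hG x
  have hswap : ∀ x : Fin n → ℝ, ∑ a, ∑ b, D b a * x a * x b = ∑ a, ∑ b, D a b * x a * x b := by
    intro x
    rw [Finset.sum_comm]
    exact Finset.sum_congr rfl fun a _ => Finset.sum_congr rfl fun b _ => by ring
  have hHm : Hm.PosSemidef := by
    refine Matrix.PosSemidef.of_dotProduct_mulVec_nonneg ?_ ?_
    · ext a b
      simp only [Matrix.conjTranspose_apply, star_trivial, hHm_def, Matrix.of_apply]
      ring
    · intro x
      rw [quad]
      have e : ∀ a ∈ Finset.univ, ∀ b ∈ Finset.univ, Hm a b * x a * x b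
          = (-(1/2) : ℝ) * (D a b * x a * x b) + (-(1/2) : ℝ) * (D b a * x a * x b) := by
        intro a _ b _; simp only [hHm_def, Matrix.of_apply]; ring
      rw [Finset.sum_congr rfl fun a ha => Finset.sum_congr rfl (e a ha), dsum_lin, hswap]
      have := hD x
      linarith
  have hBB : CFC.sqrt Gm * CFC.sqrt Gm = Gm := CFC.sqrt_mul_sqrt_self Gm (Matrix.nonneg_iff_posSemidef.mpr hGm)
  have hBH : (CFC.sqrt Gm).conjTranspose = CFC.sqrt Gm := (Matrix.nonneg_iff_posSemidef.mp (CFC.sqrt_nonneg Gm)).1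
  have hpsd : ((CFC.sqrt Gm).conjTranspose * Hm * CFC.sqrt Gm).PosSemidef := hHm.conjTranspose_mul_mul_same _
  rw [hBH] at hpsd
  have htr : (Gm * Hm).trace = (CFC.sqrt Gm * Hm * CFC.sqrt Gm).trace := by
    conv_lhs => rw [← hBB, Matrix.mul_assoc]
    exact Matrix.trace_mul_comm _ _
  have hdiag : ∀ M : Matrix (Fin n) (Fin n) ℝ, M.PosSemidef → 0 ≤ M.trace := by
    intro M hM
    rw [Matrix.trace]
    apply Finset.sum_nonneg
    intro i _
    have := hM.dotProduct_mulVec_nonneg (Pi.single i 1)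
    simpa [Matrix.mulVec_single, single_dotProduct] using this
  have htr0 : 0 ≤ (Gm * Hm).trace := htr ▸ hdiag _ hpsd
  have h2 : ∑ a, ∑ b, G a b * D b a = ∑ a, ∑ b, G a b * D a b := by
    rw [Finset.sum_comm]
    exact Finset.sum_congr rfl fun a _ => Finset.sum_congr rfl fun b _ => by rw [hGs b a]
  have hexp : (Gm * Hm).trace = -(∑ a, ∑ b, G a b * D a b) := by
    simp only [Matrix.trace, Matrix.diag, Matrix.mul_apply, hGm_def, hHm_def, Matrix.of_apply]
    have e : ∀ a ∈ (Finset.univ : Finset (Fin n)), ∀ b ∈ Finset.univ,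
        G a b * -((D b a + D a b) / 2)
        = (-(1/2) : ℝ) * (G a b * D a b) + (-(1/2) : ℝ) * (G a b * D b a) := by
      intro a _ b _; ring
    rw [Finset.sum_congr rfl fun a ha => Finset.sum_congr rfl (e a ha), dsum_lin, h2]
    ring
  rw [hexp] at htr0
  linarith

lemma quad_nonneg_of_posdef {n : ℕ} (G : Fin n → Fin n → ℝ)
    (h : ∀ w : Fin n → ℝ, w ≠ 0 → 0 < ∑ a, ∑ b, G a b * w a * w b) :
    ∀ w : Fin n → ℝ, 0 ≤ ∑ a, ∑ b, G a b * w a * w b := by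
  intro w
  rcases eq_or_ne w 0 with rfl | hw
  · simp
  · exact (h w hw).le

lemma crit_point_simp {S : Type} {N : ℕ} (m : ℕ) (K : ℝ → S → ℝ)
    (Ginv : S → Fin N → Fin N → ℝ) (u : S → ℝ) (Du : S → Fin N → ℝ)
    (D2u : S → Fin N → Fin N → ℝ) (ξ : S) (h0 : ∀ a, Du ξ a = 0) :
    MCop Ginv (fun _ => 0) u Du D2u ξ = ∑ a, ∑ b, Ginv ξ a b * D2u ξ a b
    ∧ RHSK m K Ginv (fun _ => 0) u Du ξ
        = ((m : ℝ) - 1) - Real.exp (u ξ) * K (Real.exp (u ξ)) ξ := by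
  have hlow : ∀ a, tDlow (fun _ => 0) u Du ξ a = 0 := by
    intro a; simp [tDlow, h0]
  have hup : ∀ a, tDup Ginv (fun _ => 0) u Du ξ a = 0 := by
    intro a; simp [tDup, h0]
  have hv1 : vv1 Ginv (fun _ => 0) u Du ξ = 0 := by
    simp [vv1, hlow]
  have hv2 : vv2 Ginv (fun _ => 0) u Du ξ = 0 := by
    simp [vv2]
  have hv : vv Ginv (fun _ => 0) u Du ξ = 0 := by
    simp [vv, hv1, hv2]
  constructor
  · unfold MCop
    refine Finset.sum_congr rfl fun a _ => Finset.sum_congr rfl fun b _ => ?_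
    unfold Acoef tD2
    rw [hv, hup]
    norm_num
  · unfold RHSK
    rw [hv, hv2]
    norm_num [Real.one_rpow]

theorem growth_condition_gives_C0_bounds
    (m : ℕ) (hm : 2 ≤ m) (S : Type) [TopologicalSpace S] [CompactSpace S] [Nonempty S]
    (Ginv : S → Fin (m - 1) → Fin (m - 1) → ℝ)
    (hGsymm : ∀ ξ a b, Ginv ξ a b = Ginv ξ b a) (hGpos : PosDefFam Ginv)
    (K : ℝ → S → ℝ) (hKpos : ∀ r : ℝ, 0 < r → ∀ ξ, 0 < K r ξ)
    (r₁ r₂ : ℝ) (hr₁ : 0 < r₁) (hr₁1 : r₁ ≤ 1) (hr₂ : 1 ≤ r₂)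
    -- the growth condition (1.1)
    (hK1 : ∀ r : ℝ, 0 < r → r < r₁ → ∀ ξ : S, ((m : ℝ) - 1) / r < K r ξ)
    (hK2 : ∀ r : ℝ, r₂ < r → ∀ ξ : S, K r ξ < ((m : ℝ) - 1) / r)
    (u : S → ℝ) (hu : Continuous u)
    (Du : S → Fin (m - 1) → ℝ) (D2u : S → Fin (m - 1) → Fin (m - 1) → ℝ)
    (hC2 : MaxPrincipleData u Du D2u)
    -- `u` solves the fiberwise equation (with `μ ≡ 0`: only vertical directions)
    (hEq : ∀ ξ : S, MCop Ginv (fun _ => 0) u Du D2u ξ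
      = RHSK m K Ginv (fun _ => 0) u Du ξ) :
    ∀ ξ : S, r₁ ≤ Real.exp (u ξ) ∧ Real.exp (u ξ) ≤ r₂ := by
  obtain ⟨ξ₀, -, hmax'⟩ := isCompact_univ.exists_isMaxOn Set.univ_nonempty hu.continuousOn
  obtain ⟨ξ₁, -, hmin'⟩ := isCompact_univ.exists_isMinOn Set.univ_nonempty hu.continuousOn
  have hmax : ∀ η, u η ≤ u ξ₀ := fun η => hmax' (Set.mem_univ η)
  have hmin : ∀ η, u ξ₁ ≤ u η := fun η => hmin' (Set.mem_univ η)
  obtain ⟨hDu0, hHess0⟩ := hC2.1 ξ₀ (fun η => hmax η)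
  obtain ⟨hDu1, hHess1⟩ := hC2.2 ξ₁ (fun η => hmin η)
  have h2m : (2 : ℝ) ≤ (m : ℝ) := by exact_mod_cast hm
  -- upper bound at the max point
  have hub : Real.exp (u ξ₀) ≤ r₂ := by
    by_contra h
    push_neg at h
    obtain ⟨hL, hR⟩ := crit_point_simp m K Ginv u Du D2u ξ₀ hDu0
    have htr : ∑ a, ∑ b, Ginv ξ₀ a b * D2u ξ₀ a b ≤ 0 :=
      trace_psd_nsd _ _ (hGsymm ξ₀) (quad_nonneg_of_posdef _ (hGpos ξ₀)) hHess0
    have heq := hEq ξ₀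
    rw [hL, hR] at heq
    have he : (0 : ℝ) < Real.exp (u ξ₀) := Real.exp_pos _
    have hK := hK2 _ h ξ₀
    have : Real.exp (u ξ₀) * K (Real.exp (u ξ₀)) ξ₀ < (m : ℝ) - 1 := by
      have := mul_lt_mul_of_pos_left hK he
      rwa [mul_div_cancel₀ _ he.ne'] at this
    linarith
  -- lower bound at the min point
  have hlb : r₁ ≤ Real.exp (u ξ₁) := by
    by_contra h
    push_neg at h
    obtain ⟨hL, hR⟩ := crit_point_simp m K Ginv u Du D2u ξ₁ hDu1
    have htr : 0 ≤ ∑ a, ∑ b, Ginv ξ₁ a b * D2u ξ₁ a b := by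
      have := trace_psd_nsd (fun a b => Ginv ξ₁ a b) (fun a b => -(D2u ξ₁ a b))
        (hGsymm ξ₁) (quad_nonneg_of_posdef _ (hGpos ξ₁)) ?_
      · have e : ∑ a, ∑ b, Ginv ξ₁ a b * -(D2u ξ₁ a b)
            = -(∑ a, ∑ b, Ginv ξ₁ a b * D2u ξ₁ a b) := by
          simp [Finset.sum_neg_distrib]
        rw [e] at this
        linarith
      · intro w
        have := hHess1 w
        have e : ∑ a, ∑ b, -(D2u ξ₁ a b) * w a * w b
            = -(∑ a, ∑ b, D2u ξ₁ a b * w a * w b) := by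
          simp [Finset.sum_neg_distrib]
        rw [e]
        linarith
    have heq := hEq ξ₁
    rw [hL, hR] at heq
    have he : (0 : ℝ) < Real.exp (u ξ₁) := Real.exp_pos _
    have hK := hK1 _ he h ξ₁
    have : (m : ℝ) - 1 < Real.exp (u ξ₁) * K (Real.exp (u ξ₁)) ξ₁ := by
      have := mul_lt_mul_of_pos_left hK he
      rwa [mul_div_cancel₀ _ he.ne'] at this
    linarith
  intro ξ
  constructor
  · exact le_trans hlb (Real.exp_le_exp.mpr (hmin ξ))
  · exact le_trans (Real.exp_le_exp.mpr (hmax ξ)) hub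
end
end

section
/- Nonexistence under too-fast decay: Let $K\in\mathscr{C}^\infty(E_*)$ be positive. If there exists $a\in(0,1)$ such that $K(\xi)\leq a(m-1)/\|\xi\|$ for all $\xi\in E_*$, then the equation $A^{ab}(u)\tilde D_{ab}u = -v_2 + (m-1)(1+v) - (1+v)^{3/2}e^uK(e^u\xi)$ admits no solution $u\in\mathscr{C}^2(\Sigma)$; i.e. there is no $\mathscr{C}^2$ radial graph over $\Sigma$ with mean curvature $K$. The same conclusion holds if there exists $b>1$ with $K(\xi)\geq b(m-1)/\|\xi\|$ for all $\xi\in E_*$. -/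
/-!
STATEMENT 11.  Nonexistence under too-fast decay (or too-slow decay).

Component model of the full prescribed mean curvature equation on the compact unit
sphere bundle `Σ` (type `S`) of a rank-`m ≥ 2` Riemannian vector bundle: indices
`a : Fin (n+m-1)` with `μ a ∈ {0,1}` (horizontal/vertical), inverse metric components
`Ginv`, rescaled derivatives `D̃`, `v = v₁ + v₂`, `Aᵃᵇ(u) = (1+v)Gᵃᵇ - D̃ᵃu D̃ᵇu`, and
`K r ξ` encoding `K(rξ)`.  A `C²` solution is a triple `(u, Du, D2u)` of the function
and its frame derivatives satisfying the maximum-principle properties of a `C²` function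
on the compact manifold `Σ` and the equation
`Aᵃᵇ(u)D̃_{ab}u = -v₂ + (m-1)(1+v) - (1+v)^{3/2} e^u K(e^u ξ)`.

Claim: if there is `a₀ ∈ (0,1)` with `K(ξ) ≤ a₀(m-1)/‖ξ‖` on `E_*`, or `b₀ > 1` with
`K(ξ) ≥ b₀(m-1)/‖ξ‖` on `E_*`, then the equation has no `C²` solution, i.e. there is no
`C²` radial graph over `Σ` with mean curvature `K`.
-/

noncomputable section

open scoped BigOperators

variable {S : Type} {N : ℕ}

/-- Trace of product of a positive semidefinite matrix with a "negative semidefinite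
quadratic form" matrix is nonpositive. -/
lemma trace_key {N : ℕ} (M H : Matrix (Fin N) (Fin N) ℝ) (hM : M.PosSemidef)
    (hH : ∀ w : Fin N → ℝ, ∑ a, ∑ b, H a b * w a * w b ≤ 0) :
    ∑ a, ∑ b, M a b * H a b ≤ 0 := by
  classical
  open scoped MatrixOrder in set B := CFC.sqrt M with hB
  have hBsymm : ∀ i j, B i j = B j i := by
    intro i j
    have h := congrFun (congrFun (open scoped MatrixOrder in (Matrix.nonneg_iff_posSemidef.mp (CFC.sqrt_nonneg M)).isHermitian.eq) j) i
    simpa [Matrix.conjTranspose_apply] using h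
  open scoped MatrixOrder in have hMB : M = B * B := (CFC.sqrt_mul_sqrt_self M hM.nonneg).symm
  have key : ∑ a, ∑ b, M a b * H a b = ∑ i, ∑ a, ∑ b, H a b * B a i * B b i := by
    calc ∑ a, ∑ b, M a b * H a b
        = ∑ a, ∑ b, ∑ i, H a b * B a i * B b i := by
          refine Finset.sum_congr rfl fun a _ => Finset.sum_congr rfl fun b _ => ?_
          rw [hMB, Matrix.mul_apply, Finset.sum_mul]
          exact Finset.sum_congr rfl fun i _ => by rw [hBsymm i b]; ring
      _ = ∑ a, ∑ i, ∑ b, H a b * B a i * B b i :=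
          Finset.sum_congr rfl fun a _ => Finset.sum_comm
      _ = ∑ i, ∑ a, ∑ b, H a b * B a i * B b i := Finset.sum_comm
  rw [key]
  exact Finset.sum_nonpos fun i _ => hH (fun a => B a i)

/-- At a critical point (vanishing gradient) the operator and right-hand side simplify. -/
lemma crit_eval {S : Type} {N : ℕ} (m : ℕ) (K : ℝ → S → ℝ)
    (Ginv : S → Fin N → Fin N → ℝ) (μ : Fin N → ℝ) (u : S → ℝ)
    (Du : S → Fin N → ℝ) (D2u : S → Fin N → Fin N → ℝ) (ξ : S)
    (hDu : ∀ a, Du ξ a = 0) :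
    MCop Ginv μ u Du D2u ξ
        = ∑ a, ∑ b, (Real.exp (μ a * u ξ) * Real.exp (μ b * u ξ) * Ginv ξ a b)
            * D2u ξ a b
      ∧ RHSK m K Ginv μ u Du ξ
        = ((m : ℝ) - 1) - Real.exp (u ξ) * K (Real.exp (u ξ)) ξ := by
  have hDlow : ∀ a, tDlow μ u Du ξ a = 0 := fun a => by simp [tDlow, hDu a]
  have hDup : ∀ a, tDup Ginv μ u Du ξ a = 0 := fun a => by simp [tDup, hDu]
  have hv1 : vv1 Ginv μ u Du ξ = 0 := by simp [vv1, hDlow]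
  have hv2 : vv2 Ginv μ u Du ξ = 0 := by simp [vv2, hDlow]
  have hv : vv Ginv μ u Du ξ = 0 := by simp [vv, hv1, hv2]
  constructor
  · unfold MCop
    refine Finset.sum_congr rfl fun a _ => Finset.sum_congr rfl fun b _ => ?_
    simp only [Acoef, hv, hDup, tD2]
    rw [show (μ a + μ b) * u ξ = μ a * u ξ + μ b * u ξ from by ring, Real.exp_add]
    ring
  · rw [RHSK, hv, hv2]
    norm_num [Real.one_rpow]

/-- The rescaled metric is positive semidefinite at each point. -/
lemma rescaled_psd {S : Type} {N : ℕ} (Ginv : S → Fin N → Fin N → ℝ)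
    (hGsymm : ∀ ξ a b, Ginv ξ a b = Ginv ξ b a) (hGpos : PosDefFam Ginv)
    (c : Fin N → ℝ) (hc : ∀ a, 0 < c a) (ξ : S) :
    Matrix.PosSemidef (Matrix.of fun a b => c a * c b * Ginv ξ a b) := by
  refine Matrix.PosSemidef.of_dotProduct_mulVec_nonneg ?_ ?_
  · ext a b
    simp only [Matrix.conjTranspose_apply, Matrix.of_apply, star_trivial]
    rw [hGsymm ξ b a]
    ring
  · intro x
    have key : dotProduct (star x) ((Matrix.of fun a b => c a * c b * Ginv ξ a b).mulVec x)
        = ∑ a, ∑ b, Ginv ξ a b * (c a * x a) * (c b * x b) := by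
      simp only [star_trivial, dotProduct, Matrix.mulVec, Matrix.of_apply,
        Finset.mul_sum]
      exact Finset.sum_congr rfl fun a _ => Finset.sum_congr rfl fun b _ => by ring
    rw [key]
    by_cases hx : x = 0
    · simp [hx]
    · have hw : (fun a => c a * x a) ≠ 0 := by
        intro h
        apply hx
        funext a
        have := congrFun h a
        simpa using (mul_eq_zero.mp this).resolve_left (hc a).ne'
      exact le_of_lt (hGpos ξ _ hw)

theorem no_radial_graph_under_fast_decay
    (n m : ℕ) (hn : 1 ≤ n) (hm : 2 ≤ m) (S : Type) [TopologicalSpace S]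
    [CompactSpace S] [Nonempty S]
    (μ : Fin (n + m - 1) → ℝ) (hμ : ∀ a, μ a = 0 ∨ μ a = 1)
    (Ginv : S → Fin (n + m - 1) → Fin (n + m - 1) → ℝ)
    (hGsymm : ∀ ξ a b, Ginv ξ a b = Ginv ξ b a) (hGpos : PosDefFam Ginv)
    (K : ℝ → S → ℝ) (hKpos : ∀ r : ℝ, 0 < r → ∀ ξ, 0 < K r ξ)
    (hdecay :
      (∃ a₀ : ℝ, 0 < a₀ ∧ a₀ < 1 ∧
        ∀ r : ℝ, 0 < r → ∀ ξ : S, K r ξ ≤ a₀ * ((m : ℝ) - 1) / r)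
      ∨ (∃ b₀ : ℝ, 1 < b₀ ∧
        ∀ r : ℝ, 0 < r → ∀ ξ : S, b₀ * ((m : ℝ) - 1) / r ≤ K r ξ)) :
    ¬ ∃ (u : S → ℝ) (Du : S → Fin (n + m - 1) → ℝ)
        (D2u : S → Fin (n + m - 1) → Fin (n + m - 1) → ℝ),
        Continuous u ∧ MaxPrincipleData u Du D2u ∧
        ∀ ξ : S, MCop Ginv μ u Du D2u ξ = RHSK m K Ginv μ u Du ξ := by
  rintro ⟨u, Du, D2u, hcont, ⟨hmax, hmin⟩, heq⟩
  have hm1 : (1 : ℝ) ≤ (m : ℝ) - 1 := by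
    have : (2 : ℝ) ≤ (m : ℝ) := by exact_mod_cast hm
    linarith
  have hcpos : ∀ ξ : S, ∀ a, 0 < Real.exp (μ a * u ξ) := fun ξ a => Real.exp_pos _
  rcases hdecay with ⟨a₀, ha₀pos, ha₀lt, hK⟩ | ⟨b₀, hb₀, hK⟩
  · -- too-fast decay: evaluate at a maximum point
    obtain ⟨ξ, -, hξ⟩ := isCompact_univ.exists_isMaxOn Set.univ_nonempty
      hcont.continuousOn
    have hmaxξ : ∀ η, u η ≤ u ξ := fun η => hξ (Set.mem_univ η)
    obtain ⟨hDu, hHess⟩ := hmax ξ hmaxξ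
    obtain ⟨hMC, hRHS⟩ := crit_eval m K Ginv μ u Du D2u ξ hDu
    have hpsd := rescaled_psd Ginv hGsymm hGpos (fun a => Real.exp (μ a * u ξ))
      (hcpos ξ) ξ
    have hLHS : MCop Ginv μ u Du D2u ξ ≤ 0 := by
      rw [hMC]
      exact trace_key _ (Matrix.of fun a b => D2u ξ a b) hpsd hHess
    have hr : 0 < Real.exp (u ξ) := Real.exp_pos _
    have hKle := hK (Real.exp (u ξ)) hr ξ
    have hKle' : Real.exp (u ξ) * K (Real.exp (u ξ)) ξ ≤ a₀ * ((m : ℝ) - 1) := by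
      rw [div_eq_mul_inv] at hKle
      calc Real.exp (u ξ) * K (Real.exp (u ξ)) ξ
          ≤ Real.exp (u ξ) * (a₀ * ((m : ℝ) - 1) * (Real.exp (u ξ))⁻¹) :=
            mul_le_mul_of_nonneg_left hKle hr.le
        _ = a₀ * ((m : ℝ) - 1) := by field_simp
    have hRHSpos : 0 < RHSK m K Ginv μ u Du ξ := by
      rw [hRHS]
      nlinarith
    linarith [heq ξ, hRHSpos, hLHS]
  · -- too-slow decay: evaluate at a minimum point
    obtain ⟨ξ, -, hξ⟩ := isCompact_univ.exists_isMinOn Set.univ_nonempty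
      hcont.continuousOn
    have hminξ : ∀ η, u ξ ≤ u η := fun η => hξ (Set.mem_univ η)
    obtain ⟨hDu, hHess⟩ := hmin ξ hminξ
    obtain ⟨hMC, hRHS⟩ := crit_eval m K Ginv μ u Du D2u ξ hDu
    have hpsd := rescaled_psd Ginv hGsymm hGpos (fun a => Real.exp (μ a * u ξ))
      (hcpos ξ) ξ
    have hLHS : 0 ≤ MCop Ginv μ u Du D2u ξ := by
      rw [hMC]
      have := trace_key _ (Matrix.of fun a b => -D2u ξ a b) hpsd (fun w => by
        have := hHess w
        have h2 : ∑ a, ∑ b, (Matrix.of fun a b => -D2u ξ a b) a b * w a * w b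
            = -(∑ a, ∑ b, D2u ξ a b * w a * w b) := by
          simp [Finset.sum_neg_distrib, neg_mul]
        rw [h2]
        linarith)
      simp only [Matrix.of_apply, mul_neg, Finset.sum_neg_distrib] at this
      linarith
    have hr : 0 < Real.exp (u ξ) := Real.exp_pos _
    have hKge := hK (Real.exp (u ξ)) hr ξ
    have hKge' : b₀ * ((m : ℝ) - 1) ≤ Real.exp (u ξ) * K (Real.exp (u ξ)) ξ := by
      rw [div_eq_mul_inv] at hKge
      calc b₀ * ((m : ℝ) - 1)
          = Real.exp (u ξ) * (b₀ * ((m : ℝ) - 1) * (Real.exp (u ξ))⁻¹) := by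
            field_simp
        _ ≤ Real.exp (u ξ) * K (Real.exp (u ξ)) ξ :=
            mul_le_mul_of_nonneg_left hKge hr.le
    have hRHSneg : RHSK m K Ginv μ u Du ξ < 0 := by
      rw [hRHS]
      nlinarith
    linarith [heq ξ, hLHS, hRHSneg]
end
end

section
/- Necessity via the intermediate value theorem: If $K$ is a positive continuous function on $E_*$ with $K(\xi)=K(\|\xi\|)$ depending only on the radius, and there exists a $\mathscr{C}^2$ radial graph $\xi\mapsto e^{u(\xi)}\xi$ over $\Sigma$ with mean curvature $K$, then setting $r_1=\min_\Sigma e^u$ and $r_2=\max_\Sigma e^u$ one has $(m-1)/r_1 \geq K(r_1)$ and $(m-1)/r_2 \leq K(r_2)$, and hence by continuity there exists $r\in[r_1,r_2]$ with $K(r) = (m-1)/r$. -/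
/-!
STATEMENT 12.  Necessity of a critical radius, via the intermediate value theorem.

Component model of the prescribed mean curvature equation on the compact unit sphere
bundle `Σ` (type `S`), as before; here the prescribed function depends only on the
radius, `K : ℝ → ℝ`, `K r` standing for `K(rξ)` with `r = ‖rξ‖`.  A `C²` radial graph
`ξ ↦ e^{u(ξ)} ξ` with mean curvature `K` corresponds to a solution `(u, Du, D2u)` of
`Aᵃᵇ(u)D̃_{ab}u = -v₂ + (m-1)(1+v) - (1+v)^{3/2} e^u K(e^u)` with the
maximum-principle properties of a `C²` function on the compact manifold `Σ`.

Claim: setting `r₁ = min_Σ e^u` and `r₂ = max_Σ e^u`, one has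
`(m-1)/r₁ ≥ K(r₁)` and `(m-1)/r₂ ≤ K(r₂)`, hence by continuity of `K` there is
`r ∈ [r₁,r₂]` with `K(r) = (m-1)/r`.
-/

noncomputable section

lemma quad_form_eq {N : ℕ} (B : Matrix (Fin N) (Fin N) ℝ) (x : Fin N → ℝ) :
    dotProduct (star x) (Matrix.mulVec B x) = ∑ a, ∑ b, B a b * x a * x b := by
  simp only [star_trivial, dotProduct, Matrix.mulVec, Finset.mul_sum]
  exact Finset.sum_congr rfl fun a _ => Finset.sum_congr rfl fun b _ => by ring

lemma trace_contraction_nonneg {N : ℕ} (G H : Fin N → Fin N → ℝ)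
    (hGsym : ∀ a b, G a b = G b a) (hHsym : ∀ a b, H a b = H b a)
    (hG : ∀ w : Fin N → ℝ, 0 ≤ ∑ a, ∑ b, G a b * w a * w b)
    (hH : ∀ w : Fin N → ℝ, 0 ≤ ∑ a, ∑ b, H a b * w a * w b) :
    0 ≤ ∑ a, ∑ b, G a b * H a b := by
  have herm : ∀ (M : Fin N → Fin N → ℝ), (∀ a b, M a b = M b a) →
      (Matrix.of M).IsHermitian := by
    intro M hsym
    ext a b
    simp only [Matrix.conjTranspose_apply, Matrix.of_apply, star_trivial]
    exact hsym b a
  have hGpsd : (Matrix.of G).PosSemidef :=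
    Matrix.PosSemidef.of_dotProduct_mulVec_nonneg (herm G hGsym) fun x => by
    rw [quad_form_eq]; exact hG x
  have hHpsd : (Matrix.of H).PosSemidef :=
    Matrix.PosSemidef.of_dotProduct_mulVec_nonneg (herm H hHsym) fun x => by
    rw [quad_form_eq]; exact hH x
  have key : 0 ≤ (Matrix.of G * Matrix.of H).trace := by
    obtain ⟨k, v, hv⟩ := Matrix.posSemidef_iff_eq_sum_vecMulVec.mp hGpsd
    rw [hv, Finset.sum_mul, Matrix.trace_sum]
    refine Finset.sum_nonneg fun i _ => ?_
    have h2 := hH (v i)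
    refine le_trans h2 (le_of_eq ?_)
    simp only [Matrix.trace, Matrix.diag_apply, Matrix.mul_apply, Matrix.vecMulVec_apply,
      Matrix.of_apply, star_trivial]
    rw [Finset.sum_comm]
    exact Finset.sum_congr rfl fun a _ => Finset.sum_congr rfl fun b _ => by ring
  rw [Matrix.trace] at key
  refine le_trans key (le_of_eq ?_)
  simp only [Matrix.diag_apply, Matrix.mul_apply, Matrix.of_apply]
  rw [Finset.sum_comm]
  exact Finset.sum_congr rfl fun a _ => Finset.sum_congr rfl fun b _ => by
    rw [hGsym]

lemma trace_contraction_nonneg' {N : ℕ} (G H : Fin N → Fin N → ℝ)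
    (hGsym : ∀ a b, G a b = G b a)
    (hG : ∀ w : Fin N → ℝ, 0 ≤ ∑ a, ∑ b, G a b * w a * w b)
    (hH : ∀ w : Fin N → ℝ, 0 ≤ ∑ a, ∑ b, H a b * w a * w b) :
    0 ≤ ∑ a, ∑ b, G a b * H a b := by
  have key : ∀ (F : Fin N → Fin N → ℝ) (w : Fin N → ℝ),
      ∑ a, ∑ b, (F a b + F b a) / 2 * w a * w b = ∑ a, ∑ b, F a b * w a * w b := by
    intro F w
    have h1 : ∑ a, ∑ b, (F a b + F b a) / 2 * w a * w b
        = ∑ a, ∑ b, (F a b * w a * w b / 2 + F b a * w b * w a / 2) :=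
      Finset.sum_congr rfl fun a _ => Finset.sum_congr rfl fun b _ => by ring
    have h2 : ∑ a, ∑ b, (F a b * w a * w b / 2 + F b a * w b * w a / 2)
        = (∑ a, ∑ b, F a b * w a * w b / 2) + ∑ a, ∑ b, F b a * w b * w a / 2 := by
      rw [← Finset.sum_add_distrib]
      exact Finset.sum_congr rfl fun a _ => Finset.sum_add_distrib
    have h3 : ∑ a : Fin N, ∑ b : Fin N, F b a * w b * w a / 2
        = ∑ a : Fin N, ∑ b : Fin N, F a b * w a * w b / 2 := Finset.sum_comm
    rw [h1, h2, h3, ← Finset.sum_add_distrib]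
    refine Finset.sum_congr rfl fun a _ => ?_
    rw [← Finset.sum_add_distrib]
    exact Finset.sum_congr rfl fun b _ => by ring
  have hsymH : ∀ a b, (H a b + H b a) / 2 = (H b a + H a b) / 2 := fun a b => by ring
  have := trace_contraction_nonneg G (fun a b => (H a b + H b a) / 2) hGsym hsymH hG
    (fun w => by rw [key]; exact hH w)
  refine le_trans this (le_of_eq ?_)
  -- ∑∑ G ab (H ab + H ba)/2 = ∑∑ G ab H ab
  have h4 : ∑ a, ∑ b, G a b * ((H a b + H b a) / 2)
      = (∑ a, ∑ b, G a b * H a b / 2) + ∑ a, ∑ b, G a b * H b a / 2 := by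
    rw [← Finset.sum_add_distrib]
    refine Finset.sum_congr rfl fun a _ => ?_
    rw [← Finset.sum_add_distrib]
    exact Finset.sum_congr rfl fun b _ => by ring
  have h5 : ∑ a : Fin N, ∑ b : Fin N, G a b * H b a / 2
      = ∑ a : Fin N, ∑ b : Fin N, G b a * H a b / 2 := Finset.sum_comm
  rw [h4, h5, ← Finset.sum_add_distrib]
  refine Finset.sum_congr rfl fun a _ => ?_
  rw [← Finset.sum_add_distrib]
  refine Finset.sum_congr rfl fun b _ => ?_
  rw [hGsym]; ring



open scoped BigOperators

variable {S : Type} {N : ℕ}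

theorem radial_graph_forces_critical_radius
    (n m : ℕ) (hn : 1 ≤ n) (hm : 2 ≤ m) (S : Type) [TopologicalSpace S]
    [CompactSpace S] [Nonempty S]
    (μ : Fin (n + m - 1) → ℝ) (hμ : ∀ a, μ a = 0 ∨ μ a = 1)
    (Ginv : S → Fin (n + m - 1) → Fin (n + m - 1) → ℝ)
    (hGsymm : ∀ ξ a b, Ginv ξ a b = Ginv ξ b a) (hGpos : PosDefFam Ginv)
    (K : ℝ → ℝ) (hKpos : ∀ r : ℝ, 0 < r → 0 < K r)
    (hKcont : ContinuousOn K (Set.Ioi (0 : ℝ)))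
    (u : S → ℝ) (hu : Continuous u)
    (Du : S → Fin (n + m - 1) → ℝ)
    (D2u : S → Fin (n + m - 1) → Fin (n + m - 1) → ℝ)
    (hC2 : MaxPrincipleData u Du D2u)
    -- `u` solves the equation with radial prescribed function `K`
    (hEq : ∀ ξ : S, MCop Ginv μ u Du D2u ξ
      = RHSK m (fun r _ => K r) Ginv μ u Du ξ)
    (r₁ r₂ : ℝ)
    (hr₁ : r₁ = sInf (Set.range fun ξ : S => Real.exp (u ξ)))
    (hr₂ : r₂ = sSup (Set.range fun ξ : S => Real.exp (u ξ))) :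
    K r₁ ≤ ((m : ℝ) - 1) / r₁
    ∧ ((m : ℝ) - 1) / r₂ ≤ K r₂
    ∧ ∃ r : ℝ, r ∈ Set.Icc r₁ r₂ ∧ K r = ((m : ℝ) - 1) / r := by
  -- min and max points
  obtain ⟨ξ₁, -, hmin'⟩ := isCompact_univ.exists_isMinOn Set.univ_nonempty hu.continuousOn
  obtain ⟨ξ₂, -, hmax'⟩ := isCompact_univ.exists_isMaxOn Set.univ_nonempty hu.continuousOn
  have hmin : ∀ η, u ξ₁ ≤ u η := fun η => hmin' (Set.mem_univ η)
  have hmax : ∀ η, u η ≤ u ξ₂ := fun η => hmax' (Set.mem_univ η)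
  have hr₁' : r₁ = Real.exp (u ξ₁) := by
    rw [hr₁]
    refine le_antisymm (csInf_le ⟨Real.exp (u ξ₁), ?_⟩ (Set.mem_range_self ξ₁))
      (le_csInf (Set.range_nonempty _) ?_)
    · rintro y ⟨η, rfl⟩; exact Real.exp_le_exp.2 (hmin η)
    · rintro y ⟨η, rfl⟩; exact Real.exp_le_exp.2 (hmin η)
  have hr₂' : r₂ = Real.exp (u ξ₂) := by
    rw [hr₂]
    refine le_antisymm (csSup_le (Set.range_nonempty _) ?_)
      (le_csSup ⟨Real.exp (u ξ₂), ?_⟩ (Set.mem_range_self ξ₂))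
    · rintro y ⟨η, rfl⟩; exact Real.exp_le_exp.2 (hmax η)
    · rintro y ⟨η, rfl⟩; exact Real.exp_le_exp.2 (hmax η)
  have hr₁pos : 0 < r₁ := hr₁' ▸ Real.exp_pos _
  have hr₂pos : 0 < r₂ := hr₂' ▸ Real.exp_pos _
  have h12 : r₁ ≤ r₂ := by rw [hr₁', hr₂']; exact Real.exp_le_exp.2 (hmin ξ₂)
  -- evaluation of the equation at a critical point
  have heval : ∀ ξ : S, (∀ a, Du ξ a = 0) →
      MCop Ginv μ u Du D2u ξ
        = ∑ a, ∑ b, (Real.exp (μ a * u ξ) * Real.exp (μ b * u ξ) * Ginv ξ a b)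
            * D2u ξ a b
      ∧ RHSK m (fun r _ => K r) Ginv μ u Du ξ
        = ((m : ℝ) - 1) - Real.exp (u ξ) * K (Real.exp (u ξ)) := by
    intro ξ hDu
    have htl : ∀ a, tDlow μ u Du ξ a = 0 := fun a => by simp [tDlow, hDu]
    have htu : ∀ a, tDup Ginv μ u Du ξ a = 0 := fun a => by simp [tDup, hDu]
    have hv1 : vv1 Ginv μ u Du ξ = 0 := by
      unfold vv1; simp [htl]
    have hv2 : vv2 Ginv μ u Du ξ = 0 := by
      unfold vv2; simp [htl]
    have hv : vv Ginv μ u Du ξ = 0 := by rw [vv, hv1, hv2, add_zero]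
    constructor
    · unfold MCop tD2
      refine Finset.sum_congr rfl fun a _ => Finset.sum_congr rfl fun b _ => ?_
      rw [Acoef, hv, htu, add_mul (μ a) (μ b) (u ξ), Real.exp_add]
      ring
    · rw [RHSK, hv, hv2]
      simp [Real.one_rpow]
  -- positive semidefiniteness of the weighted metric
  have hGq : ∀ ξ : S, ∀ w : Fin (n + m - 1) → ℝ,
      0 ≤ ∑ a, ∑ b, (Real.exp (μ a * u ξ) * Real.exp (μ b * u ξ) * Ginv ξ a b)
          * w a * w b := by
    intro ξ w
    rcases eq_or_ne w 0 with rfl | hw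
    · simp
    · obtain ⟨a₀, ha₀⟩ := Function.ne_iff.mp hw
      have hne : (fun a => Real.exp (μ a * u ξ) * w a) ≠ 0 :=
        Function.ne_iff.mpr ⟨a₀, mul_ne_zero (Real.exp_ne_zero _) ha₀⟩
      have := (hGpos ξ _ hne).le
      refine le_trans this (le_of_eq ?_)
      refine Finset.sum_congr rfl fun a _ => Finset.sum_congr rfl fun b _ => ?_
      ring
  have hGsym' : ∀ ξ : S, ∀ a b,
      Real.exp (μ a * u ξ) * Real.exp (μ b * u ξ) * Ginv ξ a b
        = Real.exp (μ b * u ξ) * Real.exp (μ a * u ξ) * Ginv ξ b a := by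
    intro ξ a b; rw [hGsymm]; ring
  -- at the minimum point
  obtain ⟨hDu1, hH1⟩ := hC2.2 ξ₁ hmin
  obtain ⟨hMC1, hR1⟩ := heval ξ₁ hDu1
  have hpos1 : 0 ≤ MCop Ginv μ u Du D2u ξ₁ := by
    rw [hMC1]
    exact trace_contraction_nonneg' _ _ (hGsym' ξ₁) (hGq ξ₁) hH1
  have hineq1 : r₁ * K r₁ ≤ (m : ℝ) - 1 := by
    have := hpos1
    rw [hEq ξ₁, hR1, ← hr₁'] at this
    linarith
  -- at the maximum point
  obtain ⟨hDu2, hH2⟩ := hC2.1 ξ₂ hmax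
  obtain ⟨hMC2, hR2⟩ := heval ξ₂ hDu2
  have hneg2 : MCop Ginv μ u Du D2u ξ₂ ≤ 0 := by
    have := trace_contraction_nonneg' _ (fun a b => -(D2u ξ₂ a b)) (hGsym' ξ₂) (hGq ξ₂)
      (fun w => by
        have := hH2 w
        have hrw : ∑ a, ∑ b, -(D2u ξ₂ a b) * w a * w b
            = -∑ a, ∑ b, D2u ξ₂ a b * w a * w b := by
          rw [← Finset.sum_neg_distrib]
          refine Finset.sum_congr rfl fun a _ => ?_
          rw [← Finset.sum_neg_distrib]
          exact Finset.sum_congr rfl fun b _ => by ring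
        rw [hrw]; linarith)
    have hrw2 : ∑ a, ∑ b,
        (Real.exp (μ a * u ξ₂) * Real.exp (μ b * u ξ₂) * Ginv ξ₂ a b) * -(D2u ξ₂ a b)
        = -∑ a, ∑ b,
          (Real.exp (μ a * u ξ₂) * Real.exp (μ b * u ξ₂) * Ginv ξ₂ a b) * D2u ξ₂ a b := by
      rw [← Finset.sum_neg_distrib]
      refine Finset.sum_congr rfl fun a _ => ?_
      rw [← Finset.sum_neg_distrib]
      exact Finset.sum_congr rfl fun b _ => by ring
    rw [hrw2] at this
    rw [hMC2]
    linarith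
  have hineq2 : (m : ℝ) - 1 ≤ r₂ * K r₂ := by
    have := hneg2
    rw [hEq ξ₂, hR2, ← hr₂'] at this
    linarith
  have hK1 : K r₁ ≤ ((m : ℝ) - 1) / r₁ := by
    rw [le_div_iff₀ hr₁pos]
    calc K r₁ * r₁ = r₁ * K r₁ := mul_comm _ _
    _ ≤ (m : ℝ) - 1 := hineq1
  have hK2 : ((m : ℝ) - 1) / r₂ ≤ K r₂ := by
    rw [div_le_iff₀ hr₂pos]
    calc (m : ℝ) - 1 ≤ r₂ * K r₂ := hineq2
    _ = K r₂ * r₂ := mul_comm _ _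
  refine ⟨hK1, hK2, ?_⟩
  have hss : Set.Icc r₁ r₂ ⊆ Set.Ioi (0 : ℝ) := fun x hx => lt_of_lt_of_le hr₁pos hx.1
  have hcont : ContinuousOn (fun r => r * K r) (Set.Icc r₁ r₂) :=
    continuousOn_id.mul (hKcont.mono hss)
  have hmem : (m : ℝ) - 1 ∈ Set.Icc (r₁ * K r₁) (r₂ * K r₂) := ⟨hineq1, hineq2⟩
  obtain ⟨r, hrIcc, hrK⟩ := intermediate_value_Icc h12 hcont hmem
  have hrpos : 0 < r := lt_of_lt_of_le hr₁pos hrIcc.1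
  refine ⟨r, hrIcc, ?_⟩
  rw [eq_div_iff hrpos.ne']
  rw [mul_comm]
  exact hrK
end
end
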